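/- For letters a_1, ..., a_k and a letter a distinct from all a_i, and any word w not containing a: (sh_{a_k} ∘ ⋯ ∘ sh_{a_1})(w) equals the shuffle product w ⧢ a_1 ⧢ a_2 ⧢ ⋯ ⧢ a_k, which also equals (Θ_{a,a_k} ∘ ⋯ ∘ Θ_{a,a_1})(w ⧢ a^k) where a^k is the word consisting of k copies of a. -/

import Mathlib

open Finsupp

variable {A : Type} [DecidableEq A]

/-- The formal sum of `Finsupp.single w 1` over a list of words. -/
noncomputable def wordSum (l : List (List A)) : List A →₀ ℂ :=
  (l.map fun w => Finsupp.single w (1 : ℂ)).sum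

/-- All words obtained from `w` by inserting the letter `a` at one position. -/
def insertions (a : A) : List A → List (List A)
  | [] => [[a]]
  | b :: t => (a :: b :: t) :: (insertions a t).map (b :: ·)

/-- All words obtained from `w` by deleting one occurrence of the letter `a`. -/
def deletions (a : A) : List A → List (List A)
  | [] => []
  | b :: t => (if b = a then [t] else []) ++ (deletions a t).map (b :: ·)

/-- All words obtained from `w` by replacing one occurrence of `b` by `a`. -/
def replacements (b a : A) : List A → List (List A)
  | [] => []
  | c :: t => (if c = b then [a :: t] else []) ++ (replacements b a t).map (c :: ·)

/-- The insertion operator `sh_a`. -/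
noncomputable def shOp (a : A) : (List A →₀ ℂ) →ₗ[ℂ] (List A →₀ ℂ) :=
  Finsupp.linearCombination ℂ (fun w => wordSum (insertions a w))

/-- The deletion operator `∂_a`. -/
noncomputable def delOp (a : A) : (List A →₀ ℂ) →ₗ[ℂ] (List A →₀ ℂ) :=
  Finsupp.linearCombination ℂ (fun w => wordSum (deletions a w))

/-- The replacement operator `Θ_{b,a}`. -/
noncomputable def repOp (b a : A) : (List A →₀ ℂ) →ₗ[ℂ] (List A →₀ ℂ) :=
  Finsupp.linearCombination ℂ (fun w => wordSum (replacements b a w))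

/-- Remove the letter at position `i` of `w` and reinsert it at position `j` (0-based). -/
def moveCard (w : List A) (i j : ℕ) : List A :=
  match w[i]? with
  | Option.none => w
  | Option.some c => (w.eraseIdx i).insertIdx j c

/-- The random-to-random operator applied to a single word: the sum over all ordered
pairs of positions `(i, j)` of removing the letter at position `i` and reinserting it
at position `j` (the diagonal `i = j` contributes `w.length • w`). -/
noncomputable def r2rWord (w : List A) : List A →₀ ℂ :=
  ∑ i ∈ Finset.range w.length, ∑ j ∈ Finset.range w.length,
    Finsupp.single (moveCard w i j) (1 : ℂ)

/-- The (unnormalized) random-to-random operator `R2R`. -/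
noncomputable def r2rOp : (List A →₀ ℂ) →ₗ[ℂ] (List A →₀ ℂ) :=
  Finsupp.linearCombination ℂ r2rWord

/-- Random-to-top on a single word: move the letter at each position to the end. -/
noncomputable def r2tWord (w : List A) : List A →₀ ℂ :=
  ∑ i ∈ Finset.range w.length, Finsupp.single (moveCard w i (w.length - 1)) (1 : ℂ)

/-- The (unnormalized) random-to-top operator `R2T`. -/
noncomputable def r2tOp : (List A →₀ ℂ) →ₗ[ℂ] (List A →₀ ℂ) :=
  Finsupp.linearCombination ℂ r2tWord

/-- Top-to-random on a single word: move the last letter to each position. -/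
noncomputable def t2rWord (w : List A) : List A →₀ ℂ :=
  ∑ j ∈ Finset.range w.length, Finsupp.single (moveCard w (w.length - 1) j) (1 : ℂ)

/-- The (unnormalized) top-to-random operator `T2R`. -/
noncomputable def t2rOp : (List A →₀ ℂ) →ₗ[ℂ] (List A →₀ ℂ) :=
  Finsupp.linearCombination ℂ t2rWord

/-- The list of all shuffles (interleavings) of two words; `wordSum (shuffles w u)` is
the shuffle product `w ⧢ u`. -/
def shuffles : List A → List A → List (List A)
  | [], u => [u]
  | a :: w, [] => [a :: w]
  | a :: w, b :: u =>
      ((shuffles w (b :: u)).map (a :: ·)) ++ ((shuffles (a :: w) u).map (b :: ·))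
  termination_by w u => w.length + u.length


section AuxLemmas
set_option linter.unusedSectionVars false

lemma shuffles_nil_left (v : List A) : shuffles [] v = [v] := by simp [shuffles]
lemma shuffles_nil_right (u : List A) : shuffles u [] = [u] := by cases u <;> simp [shuffles]
lemma shuffles_cons_cons (c d : A) (w t : List A) :
    shuffles (c::w) (d::t) = ((shuffles w (d::t)).map (c :: ·)) ++ ((shuffles (c::w) t).map (d :: ·)) := by
  simp [shuffles]

noncomputable def cns (c : A) : (List A →₀ ℂ) →ₗ[ℂ] (List A →₀ ℂ) :=
  Finsupp.lmapDomain ℂ ℂ (c :: ·)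
@[simp] lemma cns_single (c : A) (w : List A) (r : ℂ) :
    cns c (Finsupp.single w r) = Finsupp.single (c :: w) r := by simp [cns]
@[simp] lemma wordSum_nil : wordSum ([] : List (List A)) = 0 := rfl
@[simp] lemma wordSum_cons (u : List A) (L : List (List A)) :
    wordSum (u :: L) = Finsupp.single u 1 + wordSum L := by simp [wordSum]
@[simp] lemma wordSum_append (L M : List (List A)) :
    wordSum (L ++ M) = wordSum L + wordSum M := by simp [wordSum]
@[simp] lemma wordSum_map_cons (c : A) (L : List (List A)) :
    wordSum (L.map (c :: ·)) = cns c (wordSum L) := by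
  induction L with
  | nil => simp
  | cons u L ih => simp [ih, map_add]

noncomputable def mulw : (List A →₀ ℂ) →ₗ[ℂ] (List A →₀ ℂ) →ₗ[ℂ] (List A →₀ ℂ) :=
  Finsupp.linearCombination ℂ
    (fun u => Finsupp.linearCombination ℂ (fun v => wordSum (shuffles u v)))
@[simp] lemma mulw_single_single (u v : List A) (r s : ℂ) :
    mulw (Finsupp.single u r) (Finsupp.single v s) = (r * s) • wordSum (shuffles u v) := by
  simp [mulw, Finsupp.linearCombination_single, smul_smul]

@[simp] lemma repOp_single (a b : A) (u : List A) (r : ℂ) :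
    repOp a b (Finsupp.single u r) = r • wordSum (replacements a b u) := by
  simp [repOp, Finsupp.linearCombination_single]
@[simp] lemma shOp_single (b : A) (u : List A) (r : ℂ) :
    shOp b (Finsupp.single u r) = r • wordSum (insertions b u) := by
  simp [shOp, Finsupp.linearCombination_single]

-- generic linearity lemmas
lemma lin_wordSum (T : (List A →₀ ℂ) →ₗ[ℂ] (List A →₀ ℂ)) (L : List (List A)) :
    T (wordSum L) = (L.map (fun u => T (Finsupp.single u 1))).sum := by
  induction L with
  | nil => simp
  | cons u L ih => simp [map_add, ih]

lemma wordSum_flatMap (L : List (List A)) (f : List A → List (List A)) :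
    wordSum (L.flatMap f) = (L.map (fun u => wordSum (f u))).sum := by
  induction L with
  | nil => simp
  | cons u L ih => simp [ih]

-- Θ on cns
lemma repOp_cns (a b c : A) (x : List A →₀ ℂ) :
    repOp a b (cns c x) =
      (if c = a then cns b x else 0) + cns c (repOp a b x) := by
  induction x using Finsupp.induction_linear with
  | zero => simp
  | add f g hf hg =>
      simp only [map_add, hf, hg]
      split <;> abel
  | single u r =>
      simp [replacements]
      split <;> simp [smul_add]

-- mulw with empty word
lemma mulw_nil_left (x : List A →₀ ℂ) : mulw (Finsupp.single ([] : List A) 1) x = x := by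
  induction x using Finsupp.induction_linear with
  | zero => simp
  | add f g hf hg => simp [map_add, hf, hg]
  | single u r => simp [shuffles_nil_left]

lemma mulw_nil_right (x : List A →₀ ℂ) : mulw x (Finsupp.single ([] : List A) 1) = x := by
  induction x using Finsupp.induction_linear with
  | zero => simp
  | add f g hf hg => simp [map_add, hf, hg]
  | single u r => simp [shuffles_nil_right]

lemma replacements_eq_nil (a b : A) (u : List A) (hu : a ∉ u) :
    replacements a b u = [] := by
  induction u with
  | nil => rfl
  | cons c t ih =>
      simp only [List.mem_cons, not_or] at hu
      simp [replacements, Ne.symm hu.1, ih hu.2]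

lemma replacements_cons (a b c : A) (t : List A) :
    replacements a b (c::t) = (if c = a then [b :: t] else []) ++ (replacements a b t).map (c :: ·) := rfl

lemma rep_replicate (a b : A) (k : ℕ) :
    wordSum (replacements a b (List.replicate (k+1) a)) =
      wordSum (shuffles [b] (List.replicate k a)) := by
  induction k with
  | zero => simp [replacements, List.replicate, shuffles_nil_right]
  | succ k ih =>
      rw [show List.replicate (k+1+1) a = a :: List.replicate (k+1) a from rfl,
        replacements_cons, if_pos rfl]
      conv_rhs => rw [show List.replicate (k+1) a = a :: List.replicate k a from rfl,
        shuffles_cons_cons]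
      rw [shuffles_nil_left]
      simp only [wordSum_append, wordSum_cons, wordSum_map_cons, List.map_cons,
        List.map_nil, wordSum_nil]
      rw [ih]
      simp [List.replicate_succ]

-- abbreviation
noncomputable def Ak (a : A) (k : ℕ) : List A →₀ ℂ := Finsupp.single (List.replicate k a) 1

@[simp] lemma mulw_Ak_zero (a : A) (x : List A →₀ ℂ) : mulw x (Ak a 0) = x := by
  simpa [Ak] using mulw_nil_right x

lemma mulA_cons' (a c : A) (w : List A) (r : ℂ) (k : ℕ) :
    mulw (Finsupp.single (c::w) r) (Ak a (k+1)) =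
      cns c (mulw (Finsupp.single w r) (Ak a (k+1))) +
        cns a (mulw (Finsupp.single (c::w) r) (Ak a k)) := by
  simp only [Ak, List.replicate_succ]
  rw [mulw_single_single, shuffles_cons_cons]
  simp [← List.replicate_succ, smul_add, map_smul]

lemma mulA_cons (a c : A) (w : List A) (k : ℕ) :
    mulw (Finsupp.single (c::w) 1) (Ak a (k+1)) =
      cns c (mulw (Finsupp.single w 1) (Ak a (k+1))) +
        cns a (mulw (Finsupp.single (c::w) 1) (Ak a k)) :=
  mulA_cons' a c w 1 k

lemma mulw_cns_Ak (a c : A) (k : ℕ) (x : List A →₀ ℂ) :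
    mulw (cns c x) (Ak a (k+1)) =
      cns c (mulw x (Ak a (k+1))) + cns a (mulw (cns c x) (Ak a k)) := by
  induction x using Finsupp.induction_linear with
  | zero => simp
  | add f g hf hg => simp only [map_add, LinearMap.add_apply, hf, hg]; abel
  | single u r =>
      rw [cns_single]
      exact mulA_cons' a c u r k

lemma mulb_cons (b c : A) (w : List A) :
    mulw (Finsupp.single (c::w) 1) (Finsupp.single [b] 1) =
      cns c (mulw (Finsupp.single w 1) (Finsupp.single [b] 1)) +
        Finsupp.single (b::c::w) 1 := by
  rw [mulw_single_single, shuffles_cons_cons]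
  simp [shuffles_nil_right]

lemma core (a b : A) : ∀ (u : List A), a ∉ u → ∀ k : ℕ,
    repOp a b (mulw (Finsupp.single u 1) (Ak a (k+1))) =
      mulw (mulw (Finsupp.single u 1) (Finsupp.single [b] 1)) (Ak a k) := by
  intro u
  induction u with
  | nil =>
      intro _ k
      rw [mulw_nil_left, mulw_nil_left]
      simp only [Ak, repOp_single, one_smul, rep_replicate, mulw_single_single, one_mul]
  | cons c w ihw =>
      intro hu
      have hc : c ≠ a := fun h => hu (by simp [h])
      have hw : a ∉ w := fun h => hu (List.mem_cons_of_mem _ h)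
      intro k
      induction k with
      | zero =>
          rw [mulA_cons a c w 0, mulw_Ak_zero, map_add, repOp_cns, repOp_cns, if_neg hc,
            if_pos rfl, ihw hw 0, mulw_Ak_zero, mulb_cons b c w, repOp_single,
            replacements_eq_nil a b _ hu]
          simp
      | succ j ihk =>
          rw [mulA_cons a c w (j+1), map_add, repOp_cns, repOp_cns, if_neg hc, if_pos rfl,
            ihw hw (j+1), ihk]
          rw [mulb_cons b c w]
          simp only [map_add, LinearMap.add_apply, mulw_cns_Ak, mulA_cons' a b (c::w) 1 j]
          abel

lemma shuffles_cons_single (b c : A) (w : List A) :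
    shuffles (c::w) [b] = ((shuffles w [b]).map (c :: ·)) ++ [b::c::w] := by
  rw [shuffles_cons_cons, shuffles_nil_right]; rfl

lemma ins_eq (b : A) (u : List A) :
    wordSum (insertions b u) = wordSum (shuffles u [b]) := by
  induction u with
  | nil => simp [insertions, shuffles_nil_left]
  | cons c t ih => rw [shuffles_cons_single]; simp [insertions, ih]; abel

lemma not_mem_shuffles_single (a b : A) (hb : b ≠ a) :
    ∀ (u : List A), a ∉ u → ∀ x ∈ shuffles u [b], a ∉ x := by
  intro u
  induction u with
  | nil =>
      intro _ x hx
      rw [shuffles_nil_left] at hx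
      simp at hx
      simp [hx, Ne.symm hb]
  | cons c w ih =>
      intro hu x hx
      have hc : a ≠ c := fun h => hu (by simp [h])
      have hw : a ∉ w := fun h => hu (List.mem_cons_of_mem _ h)
      rw [shuffles_cons_single] at hx
      rcases List.mem_append.1 hx with h | h
      · rcases List.mem_map.1 h with ⟨y, hy, rfl⟩
        simp [hc, ih hw y hy]
      · simp at h
        simp [h, Ne.symm hb, hc, hu]

lemma shOp_wordSum (b : A) (L : List (List A)) :
    shOp b (wordSum L) = wordSum (L.flatMap (fun u => shuffles u [b])) := by
  induction L with
  | nil => simp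
  | cons u L ih => simp [map_add, ih, ins_eq]

lemma part1 (as : List A) : ∀ L : List (List A),
    as.foldl (fun v b => shOp b v) (wordSum L) =
      wordSum (as.foldl (fun M b => M.flatMap (fun u => shuffles u [b])) L) := by
  induction as with
  | nil => intro L; rfl
  | cons b as ih =>
      intro L
      simp only [List.foldl_cons]
      rw [shOp_wordSum]
      exact ih _

lemma mulw_wordSum_Ak (a : A) (k : ℕ) (M : List (List A)) :
    mulw (wordSum M) (Ak a k) =
      wordSum (M.flatMap (fun s => shuffles s (List.replicate k a))) := by
  induction M with
  | nil => simp
  | cons s M ih =>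
      simp only [wordSum_cons, List.flatMap_cons, wordSum_append, map_add,
        LinearMap.add_apply]
      rw [ih]
      congr 1
      simp [Ak]

lemma rep_step (a b : A) (k : ℕ) : ∀ L : List (List A), (∀ u ∈ L, a ∉ u) →
    repOp a b (wordSum (L.flatMap (fun u => shuffles u (List.replicate (k+1) a)))) =
      wordSum ((L.flatMap (fun u => shuffles u [b])).flatMap
        (fun s => shuffles s (List.replicate k a))) := by
  intro L
  induction L with
  | nil => intro _; simp
  | cons u L ih =>
      intro hL
      have hu : a ∉ u := hL u (List.mem_cons_self ..)
      have h1 : wordSum (shuffles u (List.replicate (k+1) a)) =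
          mulw (Finsupp.single u 1) (Ak a (k+1)) := by simp [Ak]
      simp only [List.flatMap_cons, wordSum_append, map_add, List.flatMap_append]
      rw [h1, core a b u hu k, ih (fun v hv => hL v (List.mem_cons_of_mem _ hv))]
      congr 1
      have h2 : mulw (Finsupp.single u 1) (Finsupp.single ([b] : List A) 1) =
          wordSum (shuffles u [b]) := by simp
      rw [h2, mulw_wordSum_Ak]

lemma part2 (a : A) : ∀ as : List A, (∀ x ∈ as, x ≠ a) → ∀ L : List (List A),
    (∀ u ∈ L, a ∉ u) →
    as.foldl (fun v b => repOp a b v)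
        (wordSum (L.flatMap (fun u => shuffles u (List.replicate as.length a)))) =
      wordSum (as.foldl (fun M b => M.flatMap (fun u => shuffles u [b])) L) := by
  intro as
  induction as with
  | nil => intro _ L _; simp [shuffles_nil_right]
  | cons b as ih =>
      intro ha L hL
      have hb : b ≠ a := ha b (List.mem_cons_self ..)
      simp only [List.foldl_cons, List.length_cons]
      rw [rep_step a b as.length L hL]
      refine ih (fun x hx => ha x (List.mem_cons_of_mem _ hx)) _ ?_
      intro v hv
      rcases List.mem_flatMap.1 hv with ⟨u, hu, hvu⟩
      exact not_mem_shuffles_single a b hb u (hL u hu) v hvu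

end AuxLemmas

/-- **Lemma 54.** For letters `a₁, …, a_k` and a letter `a` distinct from all of them,
and a word `w` not containing `a`:
`(sh_{a_k} ∘ ⋯ ∘ sh_{a_1})(w) = w ⧢ a₁ ⧢ ⋯ ⧢ a_k
  = (Θ_{a,a_k} ∘ ⋯ ∘ Θ_{a,a_1})(w ⧢ a^k)`. -/
theorem sh_iterate_eq_shuffle_eq_rep_iterate (a : A) (as : List A)
    (ha : ∀ x ∈ as, x ≠ a) (w : List A) (hw : a ∉ w) :
    as.foldl (fun v b => shOp b v) (Finsupp.single w (1 : ℂ)) =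
      wordSum (as.foldl (fun L b => L.flatMap (fun u => shuffles u [b])) [w]) ∧
    as.foldl (fun v b => shOp b v) (Finsupp.single w (1 : ℂ)) =
      as.foldl (fun v b => repOp a b v)
        (wordSum (shuffles w (List.replicate as.length a))) := by
  have h0 : Finsupp.single w (1:ℂ) = wordSum [w] := by simp
  have h1 : ([w] : List (List A)).flatMap
      (fun u => shuffles u (List.replicate as.length a)) =
      shuffles w (List.replicate as.length a) := by simp
  have hL : ∀ u ∈ ([w] : List (List A)), a ∉ u := by
    intro u hu
    simp only [List.mem_singleton] at hu
    subst hu; exact hw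
  constructor
  · rw [h0, part1]
  · rw [h0, part1]
    have h2 := part2 a as ha [w] hL
    rw [h1] at h2
    rw [← h2]
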